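/- Consider the discrete repeated-PPM Gaussian model with horizon n = i + d (i ≥ 1, d ≥ 0) and normalized per-bit energy β > ln 2. There exists a constant K depending only on β (not on i, d, or b) such that for every true bit string b ∈ {0,1}^n, the probability that some candidate string c ∈ {0,1}^n agreeing with b in its first i−1 positions but with c_i ≠ b_i satisfies S(c) ≥ S(b) is at most K·exp(−(d+1)·E(β)). (This is the genie-aided suffix error bound: given the correct prefix, the true waveform suffix is orthogonal to all 2^d competing suffixes, so the block orthogonal-coding bound applies over duration (d+1) slots.) -/

import Mathlib

open MeasureTheory ProbabilityTheory
open Real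
open scoped NNReal ENNReal

/-- The index set of the discrete repeated-PPM Gaussian model with horizon `n`:
pairs `(k, s)` with `1 ≤ k ≤ n` (represented by `k : Fin n`, standing for slot
`k+1`) and `s ∈ {0,1}^{k+1}` a candidate bit prefix for that slot. -/
abbrev PPMIdx (n : ℕ) : Type := Σ k : Fin n, (Fin (k.val + 1) → Bool)

/-- The length-`(k+1)` prefix of a bit string `c ∈ {0,1}^n`, for `k : Fin n`. -/
def prefixBits {n : ℕ} (c : Fin n → Bool) (k : Fin n) : Fin (k.val + 1) → Bool :=
  fun i => c (Fin.castLE k.isLt i)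

/-- The score of a candidate string `c` in the discrete repeated-PPM Gaussian
model with true string `b`, noise realization `z` and normalized per-bit energy
`β`: `S(c) = ∑_k Y_{k,(c_1,…,c_k)}` where
`Y_{k,s} = √(2β)·1{s = (b_1,…,b_k)} + N_{k,s}`. -/
noncomputable def ppmScore {n : ℕ} (β : ℝ) (b : Fin n → Bool)
    (z : PPMIdx n → ℝ) (c : Fin n → Bool) : ℝ :=
  ∑ k : Fin n,
    ((if prefixBits c k = prefixBits b k then Real.sqrt (2 * β) else 0) +
      z ⟨k, prefixBits c k⟩)

/-- The per-bit orthogonal-coding error exponent `E(β)`: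
`E(β) = (β/(2 ln 2) − 1)·ln 2` if `β > 4 ln 2`,
`E(β) = (√(β/ln 2) − 1)²·ln 2` if `ln 2 < β ≤ 4 ln 2`, and `E(β) = 0`
otherwise. -/
noncomputable def Eperbit (β : ℝ) : ℝ :=
  if 4 * Real.log 2 < β then (β / (2 * Real.log 2) - 1) * Real.log 2
  else if Real.log 2 < β then (Real.sqrt (β / Real.log 2) - 1) ^ 2 * Real.log 2
  else 0

lemma gaussian_lintegral_exp (l : ℝ) :
    ∫⁻ x : ℝ, ENNReal.ofReal (Real.exp (l * x)) ∂(gaussianReal 0 1)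
      = ENNReal.ofReal (Real.exp (l ^ 2 / 2)) := by
  rw [gaussianReal_of_var_ne_zero 0 one_ne_zero,
    lintegral_withDensity_eq_lintegral_mul _ (measurable_gaussianPDF 0 1)
      (by fun_prop : Measurable fun x : ℝ => ENNReal.ofReal (Real.exp (l * x)))]
  have hpt : ∀ x : ℝ, (gaussianPDF 0 1 x) * ENNReal.ofReal (Real.exp (l * x))
      = ENNReal.ofReal (Real.exp (l ^ 2 / 2)) * gaussianPDF l 1 x := by
    intro x
    rw [gaussianPDF, gaussianPDF, ← ENNReal.ofReal_mul (gaussianPDFReal_nonneg 0 1 x),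
      ← ENNReal.ofReal_mul (Real.exp_nonneg _)]
    congr 1
    unfold gaussianPDFReal
    rw [mul_assoc, ← Real.exp_add]
    rw [show rexp (l ^ 2 / 2) * ((√(2 * π * ((1:ℝ≥0):ℝ)))⁻¹ * rexp (-(x - l) ^ 2 / (2 * ((1:ℝ≥0):ℝ)))) = (√(2 * π * ((1:ℝ≥0):ℝ)))⁻¹ * (rexp (l ^ 2 / 2) * rexp (-(x - l) ^ 2 / (2 * ((1:ℝ≥0):ℝ)))) by ring, ← Real.exp_add]
    congr 1
    push_cast
    ring_nf
  simp only [Pi.mul_apply, hpt]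
  rw [lintegral_const_mul _ (measurable_gaussianPDF l 1), lintegral_gaussianPDF_eq_one l one_ne_zero, mul_one]


lemma lintegral_pi_prod_fin {n : ℕ} (μ : Measure ℝ) [IsProbabilityMeasure μ]
    (f : Fin n → ℝ → ℝ≥0∞) (hf : ∀ i, Measurable (f i)) :
    ∫⁻ z : Fin n → ℝ, ∏ i, f i (z i) ∂(Measure.pi fun _ => μ)
      = ∏ i, ∫⁻ x, f i x ∂μ := by
  induction n with
  | zero => simp
  | succ n ih =>
    have h := measurePreserving_piFinSuccAbove (fun _ : Fin (n + 1) => μ) 0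
    set e := MeasurableEquiv.piFinSuccAbove (fun _ : Fin (n + 1) => ℝ) 0 with he
    have hG : Measurable fun q : ℝ × (Fin n → ℝ) => f 0 q.1 * ∏ i, f i.succ (q.2 i) := by
      apply Measurable.mul
      · exact (hf 0).comp measurable_fst
      · exact (Finset.measurable_prod Finset.univ fun i _ =>
          (hf i.succ).comp ((measurable_pi_apply i).comp measurable_snd))
    have key1 : ∀ z : Fin (n + 1) → ℝ, (e z).1 = z 0 := fun z => rfl
    have key2 : ∀ (z : Fin (n + 1) → ℝ) (i : Fin n), (e z).2 i = z i.succ := by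
      intro z i
      show z (Fin.succAbove 0 i) = z i.succ
      rw [Fin.succAbove_zero]
    have key : ∀ z : Fin (n + 1) → ℝ,
        (∏ i, f i (z i)) = f 0 (e z).1 * ∏ i, f i.succ ((e z).2 i) := by
      intro z
      rw [Fin.prod_univ_succ]
      have h2 : ∀ i : Fin n, f i.succ ((e z).2 i) = f i.succ (z i.succ) :=
        fun i => by rw [key2]
      simp only [key1, h2]
    calc ∫⁻ z, ∏ i, f i (z i) ∂(Measure.pi fun _ => μ)
        = ∫⁻ z, (fun q : ℝ × (Fin n → ℝ) => f 0 q.1 * ∏ i, f i.succ (q.2 i)) (e z)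
            ∂(Measure.pi fun _ => μ) := by
          apply lintegral_congr; intro z; exact key z
      _ = ∫⁻ q, f 0 q.1 * ∏ i, f i.succ (q.2 i)
            ∂(μ.prod (Measure.pi fun _ : Fin n => μ)) := h.lintegral_comp hG
      _ = ∫⁻ x, ∫⁻ y, f 0 x * ∏ i, f i.succ (y i) ∂(Measure.pi fun _ : Fin n => μ) ∂μ :=
          lintegral_prod _ hG.aemeasurable
      _ = ∫⁻ x, f 0 x * ∏ i : Fin n, ∫⁻ t, f i.succ t ∂μ ∂μ := by
          apply lintegral_congr; intro x
          rw [lintegral_const_mul _ (Finset.measurable_prod Finset.univ fun i _ =>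
            (hf i.succ).comp (measurable_pi_apply i)), ih (fun i => f i.succ) (fun i => hf i.succ)]
      _ = (∫⁻ x, f 0 x ∂μ) * ∏ i : Fin n, ∫⁻ t, f i.succ t ∂μ := lintegral_mul_const _ (hf 0)
      _ = ∏ i, ∫⁻ x, f i x ∂μ := (Fin.prod_univ_succ fun i => ∫⁻ x, f i x ∂μ).symm

lemma lintegral_pi_prod {ι : Type*} [Fintype ι] (μ : Measure ℝ) [IsProbabilityMeasure μ]
    (f : ι → ℝ → ℝ≥0∞) (hf : ∀ i, Measurable (f i)) :
    ∫⁻ z : ι → ℝ, ∏ i, f i (z i) ∂(Measure.pi fun _ => μ)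
      = ∏ i, ∫⁻ x, f i x ∂μ := by
  have e : Fin (Fintype.card ι) ≃ ι := (Fintype.equivFin ι).symm
  have h := measurePreserving_piCongrLeft (fun _ : ι => μ) e
  set E := MeasurableEquiv.piCongrLeft (fun _ : ι => ℝ) e with hE
  have hG : Measurable fun z : ι → ℝ => ∏ i, f i (z i) :=
    Finset.measurable_prod Finset.univ fun i _ => (hf i).comp (measurable_pi_apply i)
  calc ∫⁻ z : ι → ℝ, ∏ i, f i (z i) ∂(Measure.pi fun _ => μ)
      = ∫⁻ x : Fin (Fintype.card ι) → ℝ, ∏ i, f i (E x i)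
          ∂(Measure.pi fun _ : Fin (Fintype.card ι) => μ) := (h.lintegral_comp hG).symm
    _ = ∫⁻ x : Fin (Fintype.card ι) → ℝ, ∏ j, f (e j) (x j)
          ∂(Measure.pi fun _ : Fin (Fintype.card ι) => μ) := by
        apply lintegral_congr; intro x
        rw [← Equiv.prod_comp e fun i => f i (E x i)]
        apply Finset.prod_congr rfl
        intro j _
        congr 1
        rw [hE]
        exact MeasurableEquiv.piCongrLeft_apply_apply (β := fun _ : ι => ℝ) e x j
    _ = ∏ j, ∫⁻ t, f (e j) t ∂μ :=
        lintegral_pi_prod_fin μ _ (fun j => hf (e j))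
    _ = ∏ i, ∫⁻ x, f i x ∂μ := Equiv.prod_comp e fun i => ∫⁻ x, f i x ∂μ

lemma lintegral_exp_sum_pi {ι : Type*} [Fintype ι] [DecidableEq ι] (s : Finset ι) (l : ℝ) :
    ∫⁻ z : ι → ℝ, ENNReal.ofReal (Real.exp (l * ∑ j ∈ s, z j))
        ∂(Measure.pi fun _ : ι => gaussianReal 0 1)
      = ENNReal.ofReal (Real.exp ((s.card : ℝ) * l ^ 2 / 2)) := by
  set g : ι → ℝ → ℝ≥0∞ :=
    fun i x => if i ∈ s then ENNReal.ofReal (Real.exp (l * x)) else 1 with hg_def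
  have hg : ∀ i, Measurable (g i) := by
    intro i
    by_cases h : i ∈ s <;> simp only [hg_def, h, if_true, if_false] <;> fun_prop
  have hpt : ∀ z : ι → ℝ, ENNReal.ofReal (Real.exp (l * ∑ j ∈ s, z j))
      = ∏ i, g i (z i) := by
    intro z
    rw [Finset.mul_sum, Real.exp_sum,
      ENNReal.ofReal_prod_of_nonneg (fun j _ => (Real.exp_nonneg _))]
    exact ((Finset.prod_ite_mem Finset.univ s
      fun i => ENNReal.ofReal (Real.exp (l * z i))).trans
        (by rw [Finset.univ_inter])).symm
  have hint : ∀ i : ι, (∫⁻ x, g i x ∂(gaussianReal 0 1))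
      = if i ∈ s then ENNReal.ofReal (Real.exp (l ^ 2 / 2)) else 1 := by
    intro i
    by_cases h : i ∈ s <;> simp [hg_def, h, gaussian_lintegral_exp l]
  calc ∫⁻ z : ι → ℝ, ENNReal.ofReal (Real.exp (l * ∑ j ∈ s, z j))
        ∂(Measure.pi fun _ : ι => gaussianReal 0 1)
      = ∫⁻ z : ι → ℝ, ∏ i, g i (z i) ∂(Measure.pi fun _ : ι => gaussianReal 0 1) :=
        lintegral_congr hpt
    _ = ∏ i, ∫⁻ x, g i x ∂(gaussianReal 0 1) := lintegral_pi_prod _ g hg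
    _ = ∏ i, (if i ∈ s then ENNReal.ofReal (Real.exp (l ^ 2 / 2)) else 1) :=
        Finset.prod_congr rfl fun i _ => hint i
    _ = ENNReal.ofReal (Real.exp ((s.card : ℝ) * l ^ 2 / 2)) := by
        rw [Finset.prod_ite_mem Finset.univ s, Finset.univ_inter, Finset.prod_const,
          ← ENNReal.ofReal_pow (Real.exp_nonneg _), ← Real.exp_nat_mul]
        congr 1
        ring

lemma pi_gaussian_upper_tail {ι : Type*} [Fintype ι] [DecidableEq ι] (s : Finset ι)
    (t l : ℝ) (hl : 0 ≤ l) :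
    (Measure.pi fun _ : ι => gaussianReal 0 1) {z | t ≤ ∑ j ∈ s, z j}
      ≤ ENNReal.ofReal (Real.exp ((s.card : ℝ) * l ^ 2 / 2 - l * t)) := by
  set P := Measure.pi fun _ : ι => gaussianReal 0 1
  have hmeas : Measurable fun z : ι → ℝ => ENNReal.ofReal (Real.exp (l * ∑ j ∈ s, z j)) := by
    fun_prop
  have hsub : {z : ι → ℝ | t ≤ ∑ j ∈ s, z j}
      ⊆ {z : ι → ℝ | ENNReal.ofReal (Real.exp (l * t))
          ≤ ENNReal.ofReal (Real.exp (l * ∑ j ∈ s, z j))} := by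
    intro z hz
    exact ENNReal.ofReal_le_ofReal (Real.exp_le_exp.2 (mul_le_mul_of_nonneg_left hz hl))
  have hmark := mul_meas_ge_le_lintegral₀ (μ := P) hmeas.aemeasurable (ENNReal.ofReal (Real.exp (l * t)))
  rw [lintegral_exp_sum_pi s l] at hmark
  have h1 : P {z | t ≤ ∑ j ∈ s, z j}
      ≤ P {z : ι → ℝ | ENNReal.ofReal (Real.exp (l * t))
          ≤ ENNReal.ofReal (Real.exp (l * ∑ j ∈ s, z j))} := measure_mono hsub
  have hne : ENNReal.ofReal (Real.exp (l * t)) ≠ 0 := by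
    simp [Real.exp_pos]
  have hnetop : ENNReal.ofReal (Real.exp (l * t)) ≠ ⊤ := ENNReal.ofReal_ne_top
  calc P {z | t ≤ ∑ j ∈ s, z j}
      ≤ P {z : ι → ℝ | ENNReal.ofReal (Real.exp (l * t))
          ≤ ENNReal.ofReal (Real.exp (l * ∑ j ∈ s, z j))} := h1
    _ = (ENNReal.ofReal (Real.exp (l * t)))⁻¹ * ((ENNReal.ofReal (Real.exp (l * t))) * P _) := by
        rw [← mul_assoc, ENNReal.inv_mul_cancel hne hnetop, one_mul]
    _ ≤ (ENNReal.ofReal (Real.exp (l * t)))⁻¹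
          * ENNReal.ofReal (Real.exp ((s.card : ℝ) * l ^ 2 / 2)) := by
        exact mul_le_mul_right hmark _
    _ = ENNReal.ofReal (Real.exp ((s.card : ℝ) * l ^ 2 / 2 - l * t)) := by
        rw [← ENNReal.ofReal_inv_of_pos (Real.exp_pos _), ← Real.exp_neg,
          ← ENNReal.ofReal_mul (Real.exp_nonneg _), ← Real.exp_add]
        congr 1
        ring

lemma pi_gaussian_lower_tail {ι : Type*} [Fintype ι] [DecidableEq ι] (s : Finset ι)
    (t l : ℝ) (hl : l ≤ 0) :
    (Measure.pi fun _ : ι => gaussianReal 0 1) {z | ∑ j ∈ s, z j ≤ t}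
      ≤ ENNReal.ofReal (Real.exp ((s.card : ℝ) * l ^ 2 / 2 - l * t)) := by
  set P := Measure.pi fun _ : ι => gaussianReal 0 1
  have hmeas : Measurable fun z : ι → ℝ => ENNReal.ofReal (Real.exp (l * ∑ j ∈ s, z j)) := by
    fun_prop
  have hsub : {z : ι → ℝ | ∑ j ∈ s, z j ≤ t}
      ⊆ {z : ι → ℝ | ENNReal.ofReal (Real.exp (l * t))
          ≤ ENNReal.ofReal (Real.exp (l * ∑ j ∈ s, z j))} := by
    intro z hz
    exact ENNReal.ofReal_le_ofReal (Real.exp_le_exp.2 (mul_le_mul_of_nonpos_left hz hl))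
  have hmark := mul_meas_ge_le_lintegral₀ (μ := P) hmeas.aemeasurable (ENNReal.ofReal (Real.exp (l * t)))
  rw [lintegral_exp_sum_pi s l] at hmark
  have hne : ENNReal.ofReal (Real.exp (l * t)) ≠ 0 := by
    simp [Real.exp_pos]
  have hnetop : ENNReal.ofReal (Real.exp (l * t)) ≠ ⊤ := ENNReal.ofReal_ne_top
  calc P {z | ∑ j ∈ s, z j ≤ t}
      ≤ P {z : ι → ℝ | ENNReal.ofReal (Real.exp (l * t))
          ≤ ENNReal.ofReal (Real.exp (l * ∑ j ∈ s, z j))} := measure_mono hsub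
    _ = (ENNReal.ofReal (Real.exp (l * t)))⁻¹ * ((ENNReal.ofReal (Real.exp (l * t))) * P _) := by
        rw [← mul_assoc, ENNReal.inv_mul_cancel hne hnetop, one_mul]
    _ ≤ (ENNReal.ofReal (Real.exp (l * t)))⁻¹
          * ENNReal.ofReal (Real.exp ((s.card : ℝ) * l ^ 2 / 2)) := by
        exact mul_le_mul_right hmark _
    _ = ENNReal.ofReal (Real.exp ((s.card : ℝ) * l ^ 2 / 2 - l * t)) := by
        rw [← ENNReal.ofReal_inv_of_pos (Real.exp_pos _), ← Real.exp_neg,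
          ← ENNReal.ofReal_mul (Real.exp_nonneg _), ← Real.exp_add]
        congr 1
        ring

section Comb

variable {i d : ℕ}

/-- The suffix slots. -/
def sufS (i : ℕ) (n : ℕ) : Finset (Fin n) :=
  Finset.filter (fun k : Fin n => i - 1 ≤ (k : ℕ)) Finset.univ

lemma mem_sufS {n : ℕ} (k : Fin n) : k ∈ sufS i n ↔ i - 1 ≤ (k : ℕ) := by
  simp [sufS]

lemma sufS_card (hi : 1 ≤ i) : (sufS i (i + d)).card = d + 1 := by
  have h : sufS i (i + d) = Finset.Ici (⟨i - 1, Nat.lt_of_lt_of_le (Nat.sub_lt hi Nat.one_pos) (Nat.le_add_right i d)⟩ : Fin (i + d)) := by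
    ext k
    simp [sufS, Finset.mem_Ici, Fin.le_def]
  rw [h, Fin.card_Ici]
  simp only []
  omega

lemma prefix_eq_of_lt {n : ℕ} {b c : Fin n → Bool}
    (hpre : ∀ j : Fin n, (j : ℕ) + 1 < i → c j = b j) (k : Fin n)
    (hk : (k : ℕ) + 1 < i) : prefixBits c k = prefixBits b k := by
  funext t
  exact hpre (Fin.castLE k.isLt t) (by
    have := t.isLt
    simp only [Fin.coe_castLE]
    omega)

lemma prefix_ne {n : ℕ} (hi : 1 ≤ i) (hin : i - 1 < n) {b c : Fin n → Bool}
    (hdiff : c ⟨i - 1, hin⟩ ≠ b ⟨i - 1, hin⟩) (k : Fin n)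
    (hk : i - 1 ≤ (k : ℕ)) : prefixBits c k ≠ prefixBits b k := by
  intro h
  apply hdiff
  have h2 := congrFun h ⟨i - 1, by omega⟩
  exact h2

lemma score_suffix_ineq {n : ℕ} (hi : 1 ≤ i) (hin : i - 1 < n) (β : ℝ)
    {b c : Fin n → Bool} (z : PPMIdx n → ℝ)
    (hpre : ∀ j : Fin n, (j : ℕ) + 1 < i → c j = b j)
    (hdiff : c ⟨i - 1, hin⟩ ≠ b ⟨i - 1, hin⟩)
    (h : ppmScore β b z b ≤ ppmScore β b z c) :
    ((sufS i n).card : ℝ) * Real.sqrt (2 * β)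
        + ∑ k ∈ sufS i n, z ⟨k, prefixBits b k⟩
      ≤ ∑ k ∈ sufS i n, z ⟨k, prefixBits c k⟩ := by
  have hsplitc : ppmScore β b z c
      = (∑ k ∈ sufS i n, z ⟨k, prefixBits c k⟩)
        + ∑ k ∈ Finset.filter (fun k : Fin n => ¬ (i - 1 ≤ (k : ℕ))) Finset.univ,
            (Real.sqrt (2 * β) + z ⟨k, prefixBits b k⟩) := by
    rw [ppmScore, ← Finset.sum_filter_add_sum_filter_not Finset.univ
      (fun k : Fin n => i - 1 ≤ (k : ℕ))]
    congr 1
    · refine Finset.sum_congr rfl fun k hk => ?_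
      rw [if_neg (prefix_ne hi hin hdiff k (by simpa [sufS] using hk)), zero_add]
    · refine Finset.sum_congr rfl fun k hk => ?_
      have hk' : (k : ℕ) + 1 < i := by
        simp only [Finset.mem_filter, Finset.mem_univ, true_and, not_le] at hk
        omega
      rw [prefix_eq_of_lt hpre k hk', if_pos rfl]
  have hsplitb : ppmScore β b z b
      = (((sufS i n).card : ℝ) * Real.sqrt (2 * β)
          + ∑ k ∈ sufS i n, z ⟨k, prefixBits b k⟩)
        + ∑ k ∈ Finset.filter (fun k : Fin n => ¬ (i - 1 ≤ (k : ℕ))) Finset.univ,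
            (Real.sqrt (2 * β) + z ⟨k, prefixBits b k⟩) := by
    rw [ppmScore, ← Finset.sum_filter_add_sum_filter_not Finset.univ
      (fun k : Fin n => i - 1 ≤ (k : ℕ))]
    congr 1
    · simp only [if_pos rfl]
      rw [Finset.sum_add_distrib, Finset.sum_const, nsmul_eq_mul]
      rfl
    · simp
  rw [hsplitc, hsplitb] at h
  linarith

/-- The canonical candidate with suffix bits `w`. -/
def cwCand (hi : 1 ≤ i) (b : Fin (i + d) → Bool) (w : Fin d → Bool) :
    Fin (i + d) → Bool :=
  fun j => if h1 : (j : ℕ) < i - 1 then b j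
    else if h2 : (j : ℕ) = i - 1 then !(b j)
    else w ⟨(j : ℕ) - i, by have := j.isLt; omega⟩

lemma cwCand_eq (hi : 1 ≤ i) (b c : Fin (i + d) → Bool)
    (hpre : ∀ j : Fin (i + d), (j : ℕ) + 1 < i → c j = b j)
    (hdiff : c ⟨i - 1, Nat.lt_of_lt_of_le (Nat.sub_lt hi Nat.one_pos) (Nat.le_add_right i d)⟩ ≠ b ⟨i - 1, Nat.lt_of_lt_of_le (Nat.sub_lt hi Nat.one_pos) (Nat.le_add_right i d)⟩) :
    c = cwCand hi b (fun t => c ⟨i + (t : ℕ), by have := t.isLt; omega⟩) := by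
  funext j
  unfold cwCand
  by_cases h1 : (j : ℕ) < i - 1
  · rw [dif_pos h1]
    exact hpre j (by omega)
  · rw [dif_neg h1]
    by_cases h2 : (j : ℕ) = i - 1
    · rw [dif_pos h2]
      have hj : (⟨i - 1, Nat.lt_of_lt_of_le (Nat.sub_lt hi Nat.one_pos) (Nat.le_add_right i d)⟩ : Fin (i + d)) = j := Fin.ext (by simpa using h2.symm)
      rw [← hj, Bool.eq_not_iff]
      exact hdiff
    · rw [dif_neg h2]
      congr 1
      apply Fin.ext
      simp only []
      omega

lemma cwCand_diff (hi : 1 ≤ i) (b : Fin (i + d) → Bool) (w : Fin d → Bool) :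
    cwCand hi b w ⟨i - 1, Nat.lt_of_lt_of_le (Nat.sub_lt hi Nat.one_pos) (Nat.le_add_right i d)⟩ ≠ b ⟨i - 1, Nat.lt_of_lt_of_le (Nat.sub_lt hi Nat.one_pos) (Nat.le_add_right i d)⟩ := by
  unfold cwCand
  simp only [dif_neg (lt_irrefl (i - 1)), dif_pos rfl]
  cases b ⟨i - 1, Nat.lt_of_lt_of_le (Nat.sub_lt hi Nat.one_pos) (Nat.le_add_right i d)⟩ <;> simp

end Comb

lemma eperbit_arith (β : ℝ) (hβ : Real.log 2 < β) :
    ∃ ρ : ℝ, 0 < ρ ∧ ρ ≤ 1 ∧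
      Eperbit β ≤ ρ * β / (1 + ρ) - ρ * Real.log 2 ∧ Eperbit β ≤ β := by
  have hL : 0 < Real.log 2 := Real.log_pos one_lt_two
  have hβ0 : 0 < β := lt_trans hL hβ
  set L := Real.log 2 with hL_def
  set r := Real.sqrt (β / L) with hr_def
  have hr2 : r ^ 2 = β / L := Real.sq_sqrt (by positivity)
  have hr1 : 1 < r := by
    rw [hr_def, show (1 : ℝ) = Real.sqrt 1 from Real.sqrt_one.symm]
    apply Real.sqrt_lt_sqrt (by norm_num)
    rw [lt_div_iff₀ hL]
    linarith
  have hr0 : 0 < r := by linarith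
  refine ⟨min 1 (r - 1), lt_min one_pos (by linarith), min_le_left _ _, ?_, ?_⟩
  · by_cases h4 : 4 * L < β
    · have h2r : (2 : ℝ) ≤ r := by
        rw [hr_def, show (2 : ℝ) = Real.sqrt 4 by
          rw [show (4 : ℝ) = 2 ^ 2 by norm_num, Real.sqrt_sq (by norm_num)]]
        exact Real.sqrt_le_sqrt (by rw [le_div_iff₀ hL]; linarith)
      have hρ : min 1 (r - 1) = 1 := min_eq_left (by linarith)
      rw [Eperbit, if_pos h4, hρ, ← hL_def]
      rw [show (1 : ℝ) * β / (1 + 1) - 1 * L = β / 2 - L by ring]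
      rw [show (β / (2 * L) - 1) * L = β / 2 - L by field_simp]
    · have hβ4 : β ≤ 4 * L := not_lt.1 h4
      have h2r : r ≤ 2 := by
        rw [hr_def, show (2 : ℝ) = Real.sqrt 4 by
          rw [show (4 : ℝ) = 2 ^ 2 by norm_num, Real.sqrt_sq (by norm_num)]]
        exact Real.sqrt_le_sqrt (by rw [div_le_iff₀ hL]; linarith)
      have hρ : min 1 (r - 1) = r - 1 := min_eq_right (by linarith)
      rw [Eperbit, if_neg h4, if_pos hβ, hρ, ← hL_def, ← hr_def]
      have hβeq : β = r ^ 2 * L := by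
        rw [hr2]; field_simp
      rw [show 1 + (r - 1) = r by ring, hβeq]
      rw [show (r - 1) * (r ^ 2 * L) / r - (r - 1) * L = (r - 1) ^ 2 * L by
        field_simp]
  · by_cases h4 : 4 * L < β
    · rw [Eperbit, if_pos h4, ← hL_def]
      rw [show (β / (2 * L) - 1) * L = β / 2 - L by field_simp]
      linarith
    · rw [Eperbit, if_neg h4, if_pos hβ, ← hL_def, ← hr_def]
      have hβeq : β = r ^ 2 * L := by rw [hr2]; field_simp
      nlinarith [hβeq]

lemma exp_bound (β : ℝ) (hβ : Real.log 2 < β) :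
    ∃ ρ lam : ℝ, 0 < ρ ∧ ρ ≤ 1 ∧ ∀ d : ℕ,
      (((2 : ℝ) ^ d) ^ ρ * Real.exp (lam ^ 2 * ((d : ℝ) + 1) / (2 * ρ)) *
        (Real.exp (-lam * (((d : ℝ) + 1) * Real.sqrt (2 * β))) *
          Real.exp (((d : ℝ) + 1) * lam ^ 2 / 2))
        ≤ Real.exp (-((d : ℝ) + 1) * Eperbit β))
      ∧ Real.exp (-((d : ℝ) + 1) * β) ≤ Real.exp (-((d : ℝ) + 1) * Eperbit β) := by
  obtain ⟨ρ, hρ0, hρ1, hcore, hEβ⟩ := eperbit_arith β hβ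
  have hL : 0 < Real.log 2 := Real.log_pos one_lt_two
  have hβ0 : 0 < β := lt_trans hL hβ
  set L := Real.log 2 with hL_def
  set s2 := Real.sqrt (2 * β) with hs2_def
  have hs2 : s2 ^ 2 = 2 * β := Real.sq_sqrt (by positivity)
  have h1ρ : 0 < 1 + ρ := by linarith
  refine ⟨ρ, ρ * s2 / (1 + ρ), hρ0, hρ1, fun d => ?_⟩
  set lam := ρ * s2 / (1 + ρ) with hlam_def
  set m := (d : ℝ) + 1 with hm_def
  have hm0 : (0 : ℝ) < m := by positivity
  have hdm : (d : ℝ) ≤ m := by simp [hm_def]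
  have hpow : ((2 : ℝ) ^ d) ^ ρ = Real.exp ((d : ℝ) * L * ρ) := by
    rw [Real.rpow_def_of_pos (by positivity), Real.log_pow]
  constructor
  · rw [hpow, ← Real.exp_add, ← Real.exp_add, ← Real.exp_add, Real.exp_le_exp]
    have hlam2 : lam ^ 2 = ρ ^ 2 * (2 * β) / (1 + ρ) ^ 2 := by
      rw [hlam_def, div_pow, mul_pow, hs2]
    have hlams2 : lam * s2 = ρ * (2 * β) / (1 + ρ) := by
      rw [hlam_def]
      field_simp
      linear_combination hs2
    have hkey : (d : ℝ) * L * ρ + lam ^ 2 * m / (2 * ρ) +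
          (-lam * (m * s2) + m * lam ^ 2 / 2)
        = (d : ℝ) * L * ρ - m * (ρ * β / (1 + ρ)) := by
      calc (d : ℝ) * L * ρ + lam ^ 2 * m / (2 * ρ) +
            (-lam * (m * s2) + m * lam ^ 2 / 2)
          = (d : ℝ) * L * ρ + lam ^ 2 * (m / (2 * ρ) + m / 2) - m * (lam * s2) := by
            field_simp
            ring
        _ = (d : ℝ) * L * ρ + (ρ ^ 2 * (2 * β) / (1 + ρ) ^ 2) * (m / (2 * ρ) + m / 2)
              - m * (ρ * (2 * β) / (1 + ρ)) := by rw [hlam2, hlams2]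
        _ = (d : ℝ) * L * ρ - m * (ρ * β / (1 + ρ)) := by
            field_simp
            ring
    rw [hkey]
    have h1 : m * Eperbit β ≤ m * (ρ * β / (1 + ρ)) - m * (ρ * L) := by
      have h := mul_le_mul_of_nonneg_left hcore hm0.le
      nlinarith [h]
    have h2 : (d : ℝ) * L * ρ ≤ m * (ρ * L) := by
      nlinarith [mul_le_mul_of_nonneg_right hdm (mul_pos hρ0 hL).le]
    clear_value L s2 lam m
    linarith [h1, h2]
  · rw [Real.exp_le_exp]
    nlinarith [hEβ, hm0]

/-- Genie-aided suffix error bound for repeated PPM with ML decoding: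
for normalized per-bit energy `β > ln 2` there is a constant `K` (depending
only on `β`) such that for every bit position `i ≥ 1`, every delay `d ≥ 0` and
every true string `b ∈ {0,1}^{i+d}`, the probability that some candidate
string agreeing with `b` in its first `i−1` positions but differing at
position `i` scores at least as high as `b` is at most
`K·exp(−(d+1)·E(β))`. -/
theorem repeatedPPM_suffix_error_bound (β : ℝ) (hβ : Real.log 2 < β) :
    ∃ K : ℝ, 0 < K ∧ ∀ (i d : ℕ) (hi : 1 ≤ i) (b : Fin (i + d) → Bool),
      (Measure.pi fun _ : PPMIdx (i + d) => gaussianReal 0 1)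
          {z | ∃ c : Fin (i + d) → Bool,
            (∀ j : Fin (i + d), (j : ℕ) + 1 < i → c j = b j) ∧
            c ⟨i - 1, by omega⟩ ≠ b ⟨i - 1, by omega⟩ ∧
            ppmScore β b z c ≥ ppmScore β b z b} ≤
        ENNReal.ofReal (K * Real.exp (-((d : ℝ) + 1) * Eperbit β)) := by
  obtain ⟨ρ, lam, hρ0, hρ1, hd⟩ := exp_bound β hβ
  refine ⟨2, two_pos, ?_⟩
  intro i d hi b
  obtain ⟨hexp1, hexp2⟩ := hd d
  have hβ0 : 0 < β := lt_trans (Real.log_pos one_lt_two) hβ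
  have hin : i - 1 < i + d := by omega
  have hm0 : (0 : ℝ) < (d : ℝ) + 1 := by positivity
  -- setup
  let p : PPMIdx (i + d) → Prop := fun j => j.2 = prefixBits b j.1
  haveI hdec : DecidablePred p := fun j => inferInstanceAs (Decidable (j.2 = prefixBits b j.1))
  let P := Measure.pi fun _ : PPMIdx (i + d) => gaussianReal 0 1
  let P1 := Measure.pi fun _ : {j : PPMIdx (i + d) // p j} => gaussianReal 0 1
  let P2 := Measure.pi fun _ : {j : PPMIdx (i + d) // ¬ p j} => gaussianReal 0 1
  let A : Set (PPMIdx (i + d) → ℝ) :=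
    {z | ∃ c : Fin (i + d) → Bool,
      (∀ j : Fin (i + d), (j : ℕ) + 1 < i → c j = b j) ∧
      c ⟨i - 1, hin⟩ ≠ b ⟨i - 1, hin⟩ ∧
      ppmScore β b z c ≥ ppmScore β b z b}
  show P A ≤ ENNReal.ofReal (2 * Real.exp (-((d : ℝ) + 1) * Eperbit β))
  -- measurability of scores and of A
  have hms : ∀ c : Fin (i + d) → Bool,
      Measurable fun z : PPMIdx (i + d) → ℝ => ppmScore β b z c := by
    intro c
    unfold ppmScore
    exact Finset.measurable_sum _ fun k _ => measurable_const.add (measurable_pi_apply _)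
  have hA : MeasurableSet A := by
    have hrw : A = ⋃ c : Fin (i + d) → Bool,
        {z : PPMIdx (i + d) → ℝ |
          ((∀ j : Fin (i + d), (j : ℕ) + 1 < i → c j = b j) ∧
            c ⟨i - 1, hin⟩ ≠ b ⟨i - 1, hin⟩) ∧
          ppmScore β b z b ≤ ppmScore β b z c} := by
      ext z
      simp only [A, Set.mem_setOf_eq, Set.mem_iUnion]
      constructor
      · rintro ⟨c, h1, h2, h3⟩; exact ⟨c, ⟨h1, h2⟩, h3⟩
      · rintro ⟨c, ⟨h1, h2⟩, h3⟩; exact ⟨c, h1, h2, h3⟩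
    rw [hrw]
    refine MeasurableSet.iUnion fun c => ?_
    by_cases hc : (∀ j : Fin (i + d), (j : ℕ) + 1 < i → c j = b j) ∧
        c ⟨i - 1, hin⟩ ≠ b ⟨i - 1, hin⟩
    · have h2 : {z : PPMIdx (i + d) → ℝ |
          ((∀ j : Fin (i + d), (j : ℕ) + 1 < i → c j = b j) ∧
            c ⟨i - 1, hin⟩ ≠ b ⟨i - 1, hin⟩) ∧
          ppmScore β b z b ≤ ppmScore β b z c}
          = {z | ppmScore β b z b ≤ ppmScore β b z c} :=
        Set.ext fun z => ⟨fun h => h.2, fun h => ⟨hc, h⟩⟩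
      rw [h2]
      exact measurableSet_le (hms b) (hms c)
    · have h2 : {z : PPMIdx (i + d) → ℝ |
          ((∀ j : Fin (i + d), (j : ℕ) + 1 < i → c j = b j) ∧
            c ⟨i - 1, hin⟩ ≠ b ⟨i - 1, hin⟩) ∧
          ppmScore β b z b ≤ ppmScore β b z c} = ∅ :=
        Set.ext fun z => ⟨fun h => absurd h.1 hc, fun h => h.elim⟩
      rw [h2]
      exact MeasurableSet.empty
  -- product split
  let e := MeasurableEquiv.piEquivPiSubtypeProd (fun _ : PPMIdx (i + d) => ℝ) p
  have hmp := measurePreserving_piEquivPiSubtypeProd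
      (fun _ : PPMIdx (i + d) => gaussianReal 0 1) p
  have hPA : P A = (P1.prod P2) (⇑e.symm ⁻¹' A) :=
    ((MeasurePreserving.symm e hmp).measure_preimage hA.nullMeasurableSet).symm
  have hslice : MeasurableSet (⇑e.symm ⁻¹' A) := hA.preimage e.symm.measurable
  have hzeval : ∀ (u : {j : PPMIdx (i + d) // p j} → ℝ)
      (v : {j : PPMIdx (i + d) // ¬ p j} → ℝ) (j : PPMIdx (i + d)),
      e.symm (u, v) j = if h : p j then u ⟨j, h⟩ else v ⟨j, h⟩ := by
    intro u v j
    rw [MeasurableEquiv.piEquivPiSubtypeProd_symm_apply]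
  -- the true-path sum
  let ibS : Fin (i + d) → {j : PPMIdx (i + d) // p j} :=
    fun k => ⟨⟨k, prefixBits b k⟩, rfl⟩
  let T : ({j : PPMIdx (i + d) // p j} → ℝ) → ℝ :=
    fun u => ((d : ℝ) + 1) * Real.sqrt (2 * β) + ∑ k ∈ sufS i (i + d), u (ibS k)
  have hTmeas : Measurable T :=
    measurable_const.add (Finset.measurable_sum _ fun k _ => measurable_pi_apply _)
  let sb : Finset {j : PPMIdx (i + d) // p j} := (sufS i (i + d)).image ibS
  have hibS_inj : ∀ x ∈ sufS i (i + d), ∀ y ∈ sufS i (i + d), ibS x = ibS y → x = y :=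
    fun x _ y _ h => congrArg (fun t : {j : PPMIdx (i + d) // p j} => t.1.1) h
  have hsb_card : sb.card = d + 1 := by
    rw [Finset.card_image_of_injOn fun x hx y hy h =>
      hibS_inj x (Finset.mem_coe.1 hx) y (Finset.mem_coe.1 hy) h, sufS_card hi]
  have hsb_sum : ∀ u : {j : PPMIdx (i + d) // p j} → ℝ,
      ∑ j ∈ sb, u j = ∑ k ∈ sufS i (i + d), u (ibS k) :=
    fun u => Finset.sum_image hibS_inj
  have hTu_eq : ∀ u, T u = ((d : ℝ) + 1) * Real.sqrt (2 * β) + ∑ j ∈ sb, u j := by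
    intro u
    show ((d : ℝ) + 1) * Real.sqrt (2 * β) + ∑ k ∈ sufS i (i + d), u (ibS k) = _
    rw [hsb_sum u]
  -- competitor sums
  have hnotp : ∀ (w : Fin d → Bool) (k : Fin (i + d)), k ∈ sufS i (i + d) →
      ¬ p ⟨k, prefixBits (cwCand hi b w) k⟩ := by
    intro w k hk hp
    exact prefix_ne hi hin (cwCand_diff hi b w) k ((mem_sufS k).1 hk) hp
  let icw : (Fin d → Bool) → {k // k ∈ sufS i (i + d)} → {j : PPMIdx (i + d) // ¬ p j} :=
    fun w k => ⟨⟨k.1, prefixBits (cwCand hi b w) k.1⟩, hnotp w k.1 k.2⟩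
  let sw : (Fin d → Bool) → Finset {j : PPMIdx (i + d) // ¬ p j} :=
    fun w => (sufS i (i + d)).attach.image (icw w)
  have hicw_inj : ∀ w, ∀ x ∈ (sufS i (i + d)).attach, ∀ y ∈ (sufS i (i + d)).attach,
      icw w x = icw w y → x = y :=
    fun w x _ y _ h =>
      Subtype.ext (congrArg (fun t : {j : PPMIdx (i + d) // ¬ p j} => t.1.1) h)
  have hsw_card : ∀ w, (sw w).card = d + 1 := by
    intro w
    rw [Finset.card_image_of_injOn fun x hx y hy h =>
      hicw_inj w x (Finset.mem_coe.1 hx) y (Finset.mem_coe.1 hy) h,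
      Finset.card_attach, sufS_card hi]
  have hsw_sum : ∀ w (v : {j : PPMIdx (i + d) // ¬ p j} → ℝ),
      ∑ j ∈ sw w, v j = ∑ k ∈ (sufS i (i + d)).attach, v (icw w k) :=
    fun w v => Finset.sum_image (hicw_inj w)
  -- the pointwise bounds
  let C1 : ℝ := ((2 : ℝ) ^ d) ^ ρ * Real.exp (lam ^ 2 * ((d : ℝ) + 1) / (2 * ρ))
  have hC1 : 0 ≤ C1 := by positivity
  let B1 : ({j : PPMIdx (i + d) // p j} → ℝ) → ℝ≥0∞ :=
    fun u => ENNReal.ofReal (C1 * Real.exp (-lam * T u))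
  let B2 : ({j : PPMIdx (i + d) // p j} → ℝ) → ℝ≥0∞ :=
    fun u => Set.indicator {u | T u < 0} (fun _ => 1) u
  have hR1 : ∀ t : ℝ, 0 ≤ t →
      min 1 ((2 : ℝ) ^ d * Real.exp (-t ^ 2 / (2 * ((d : ℝ) + 1))))
        ≤ C1 * Real.exp (-lam * t) := by
    intro t ht
    set y : ℝ := (2 : ℝ) ^ d * Real.exp (-t ^ 2 / (2 * ((d : ℝ) + 1))) with hy_def
    have hy0 : 0 < y := by positivity
    have step1 : min 1 y ≤ y ^ ρ := by
      rcases le_total y 1 with hy | hy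
      · rw [min_eq_right hy]
        calc y = y ^ (1 : ℝ) := (Real.rpow_one _).symm
          _ ≤ y ^ ρ := Real.rpow_le_rpow_of_exponent_ge hy0 hy hρ1
      · rw [min_eq_left hy]
        calc (1 : ℝ) = 1 ^ ρ := (Real.one_rpow _).symm
          _ ≤ y ^ ρ := Real.rpow_le_rpow zero_le_one hy hρ0.le
    have step2 : y ^ ρ = ((2 : ℝ) ^ d) ^ ρ
        * Real.exp (-t ^ 2 / (2 * ((d : ℝ) + 1)) * ρ) := by
      rw [hy_def, Real.mul_rpow (by positivity) (Real.exp_nonneg _)]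
      congr 1
      rw [Real.rpow_def_of_pos (Real.exp_pos _), Real.log_exp]
    have hiden : lam ^ 2 * ((d : ℝ) + 1) / (2 * ρ) + (-lam * t)
          - (-t ^ 2 / (2 * ((d : ℝ) + 1)) * ρ)
        = (lam * ((d : ℝ) + 1) - t * ρ) ^ 2 / (2 * ((d : ℝ) + 1) * ρ) := by
      field_simp
      ring
    have step3 : Real.exp (-t ^ 2 / (2 * ((d : ℝ) + 1)) * ρ)
        ≤ Real.exp (lam ^ 2 * ((d : ℝ) + 1) / (2 * ρ)) * Real.exp (-lam * t) := by
      rw [← Real.exp_add, Real.exp_le_exp]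
      have hnn : 0 ≤ (lam * ((d : ℝ) + 1) - t * ρ) ^ 2 / (2 * ((d : ℝ) + 1) * ρ) := by
        positivity
      linarith [hiden, hnn]
    calc min 1 y ≤ y ^ ρ := step1
      _ = ((2 : ℝ) ^ d) ^ ρ * Real.exp (-t ^ 2 / (2 * ((d : ℝ) + 1)) * ρ) := step2
      _ ≤ ((2 : ℝ) ^ d) ^ ρ
          * (Real.exp (lam ^ 2 * ((d : ℝ) + 1) / (2 * ρ)) * Real.exp (-lam * t)) :=
        mul_le_mul_of_nonneg_left step3 (by positivity)
      _ = C1 * Real.exp (-lam * t) := by rw [← mul_assoc]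
  -- inner slice bound
  have inner : ∀ u, P2 (Prod.mk u ⁻¹' (⇑e.symm ⁻¹' A)) ≤ B1 u + B2 u := by
    intro u
    by_cases ht : 0 ≤ T u
    · -- inclusion into the union over suffix words
      have hsub : (Prod.mk u ⁻¹' (⇑e.symm ⁻¹' A)) ⊆
          ⋃ w : Fin d → Bool, {v | T u ≤ ∑ j ∈ sw w, v j} := by
        intro v hv
        obtain ⟨c, h1, h2, h3⟩ := hv
        have hineq := score_suffix_ineq hi hin β (⇑e.symm (u, v)) h1 h2 h3
        rw [sufS_card hi] at hineq
        obtain ⟨w, hcw⟩ : ∃ w, c = cwCand hi b w := ⟨_, cwCand_eq hi b c h1 h2⟩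
        rw [hcw] at hineq
        refine Set.mem_iUnion.2 ⟨w, ?_⟩
        show T u ≤ ∑ j ∈ sw w, v j
        rw [hsw_sum w v]
        have hTb : ∑ k ∈ sufS i (i + d), ⇑e.symm (u, v) ⟨k, prefixBits b k⟩
            = ∑ k ∈ sufS i (i + d), u (ibS k) := by
          refine Finset.sum_congr rfl fun k _ => ?_
          rw [hzeval u v ⟨k, prefixBits b k⟩,
            dif_pos (show p ⟨k, prefixBits b k⟩ from rfl)]
        have hTc : ∑ k ∈ sufS i (i + d),
              ⇑e.symm (u, v) ⟨k, prefixBits (cwCand hi b w) k⟩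
            = ∑ k ∈ (sufS i (i + d)).attach, v (icw w k) := by
          rw [← Finset.sum_attach (sufS i (i + d))
            (fun k => ⇑e.symm (u, v) ⟨k, prefixBits (cwCand hi b w) k⟩)]
          refine Finset.sum_congr rfl fun k _ => ?_
          rw [hzeval u v ⟨k.1, prefixBits (cwCand hi b w) k.1⟩,
            dif_neg (hnotp w k.1 k.2)]
        rw [hTb, hTc] at hineq
        show ((d : ℝ) + 1) * Real.sqrt (2 * β)
            + ∑ k ∈ sufS i (i + d), u (ibS k)
          ≤ ∑ k ∈ (sufS i (i + d)).attach, v (icw w k)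
        have hcast : ((d + 1 : ℕ) : ℝ) = (d : ℝ) + 1 := by push_cast; ring
        rw [hcast] at hineq
        exact hineq
      have htail : ∀ w : Fin d → Bool, P2 {v | T u ≤ ∑ j ∈ sw w, v j}
          ≤ ENNReal.ofReal (Real.exp (-(T u) ^ 2 / (2 * ((d : ℝ) + 1)))) := by
        intro w
        refine le_trans (pi_gaussian_upper_tail (sw w) (T u) (T u / ((d : ℝ) + 1))
          (by positivity)) ?_
        apply ENNReal.ofReal_le_ofReal
        rw [Real.exp_le_exp]
        have hc : (((sw w).card : ℕ) : ℝ) = (d : ℝ) + 1 := by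
          rw [hsw_card w]; push_cast; ring
        rw [hc]
        rw [show ((d : ℝ) + 1) * (T u / ((d : ℝ) + 1)) ^ 2 / 2
            - T u / ((d : ℝ) + 1) * T u = -(T u) ^ 2 / (2 * ((d : ℝ) + 1)) by
          field_simp; ring]
      have hP2y : P2 (Prod.mk u ⁻¹' (⇑e.symm ⁻¹' A))
          ≤ ENNReal.ofReal ((2 : ℝ) ^ d
              * Real.exp (-(T u) ^ 2 / (2 * ((d : ℝ) + 1)))) := by
        calc P2 (Prod.mk u ⁻¹' (⇑e.symm ⁻¹' A))
            ≤ P2 (⋃ w : Fin d → Bool, {v | T u ≤ ∑ j ∈ sw w, v j}) :=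
              measure_mono hsub
          _ ≤ ∑' w : Fin d → Bool, P2 {v | T u ≤ ∑ j ∈ sw w, v j} :=
              measure_iUnion_le _
          _ = ∑ w : Fin d → Bool, P2 {v | T u ≤ ∑ j ∈ sw w, v j} := tsum_fintype _
          _ ≤ ∑ _w : Fin d → Bool,
                ENNReal.ofReal (Real.exp (-(T u) ^ 2 / (2 * ((d : ℝ) + 1)))) :=
              Finset.sum_le_sum fun w _ => htail w
          _ = (Fintype.card (Fin d → Bool))
                • ENNReal.ofReal (Real.exp (-(T u) ^ 2 / (2 * ((d : ℝ) + 1)))) := by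
              rw [Finset.sum_const, Finset.card_univ]
          _ = ENNReal.ofReal ((2 : ℝ) ^ d
                * Real.exp (-(T u) ^ 2 / (2 * ((d : ℝ) + 1)))) := by
              rw [Fintype.card_fun, Fintype.card_bool, Fintype.card_fin,
                nsmul_eq_mul, ← ENNReal.ofReal_natCast (2 ^ d),
                ← ENNReal.ofReal_mul (by positivity)]
              push_cast
              ring_nf
      have hminle := hR1 (T u) ht
      have hfinal : P2 (Prod.mk u ⁻¹' (⇑e.symm ⁻¹' A))
          ≤ ENNReal.ofReal (C1 * Real.exp (-lam * T u)) := by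
        rcases le_total ((2 : ℝ) ^ d * Real.exp (-(T u) ^ 2 / (2 * ((d : ℝ) + 1)))) 1
          with hy | hy
        · refine le_trans hP2y (ENNReal.ofReal_le_ofReal ?_)
          rw [min_eq_right hy] at hminle
          exact hminle
        · refine le_trans prob_le_one ?_
          rw [min_eq_left hy] at hminle
          rw [← ENNReal.ofReal_one]
          exact ENNReal.ofReal_le_ofReal hminle
      exact le_trans hfinal le_self_add
    · have hB2 : B2 u = 1 :=
        Set.indicator_of_mem (show u ∈ {u | T u < 0} from not_le.1 ht) _
      calc P2 (Prod.mk u ⁻¹' (⇑e.symm ⁻¹' A)) ≤ 1 := prob_le_one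
        _ = B2 u := hB2.symm
        _ ≤ B1 u + B2 u := le_add_self
  -- integrate the bounds
  have hB1meas : Measurable B1 :=
    (((hTmeas.const_mul (-lam)).exp).const_mul C1).ennreal_ofReal
  have hTset : MeasurableSet {u : ({j : PPMIdx (i + d) // p j} → ℝ) | T u < 0} :=
    measurableSet_lt hTmeas measurable_const
  have hint1 : ∫⁻ u, B1 u ∂P1
      ≤ ENNReal.ofReal (Real.exp (-((d : ℝ) + 1) * Eperbit β)) := by
    have hsplit : ∀ u, B1 u
        = ENNReal.ofReal (C1 * Real.exp (-lam * (((d : ℝ) + 1) * Real.sqrt (2 * β))))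
          * ENNReal.ofReal (Real.exp (-lam * ∑ j ∈ sb, u j)) := by
      intro u
      rw [← ENNReal.ofReal_mul (by positivity)]
      show ENNReal.ofReal (C1 * Real.exp (-lam * T u)) = _
      congr 1
      rw [show -lam * T u = -lam * (((d : ℝ) + 1) * Real.sqrt (2 * β))
          + -lam * ∑ j ∈ sb, u j by rw [hTu_eq u]; ring, Real.exp_add]
      ring
    calc ∫⁻ u, B1 u ∂P1
        = ∫⁻ u, ENNReal.ofReal (C1 * Real.exp (-lam * (((d : ℝ) + 1) * Real.sqrt (2 * β))))
            * ENNReal.ofReal (Real.exp (-lam * ∑ j ∈ sb, u j)) ∂P1 :=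
          lintegral_congr hsplit
      _ = ENNReal.ofReal (C1 * Real.exp (-lam * (((d : ℝ) + 1) * Real.sqrt (2 * β))))
            * ∫⁻ u, ENNReal.ofReal (Real.exp (-lam * ∑ j ∈ sb, u j)) ∂P1 :=
          lintegral_const_mul _ (by fun_prop)
      _ = ENNReal.ofReal (C1 * Real.exp (-lam * (((d : ℝ) + 1) * Real.sqrt (2 * β))))
            * ENNReal.ofReal (Real.exp ((sb.card : ℝ) * (-lam) ^ 2 / 2)) := by
          rw [lintegral_exp_sum_pi sb (-lam)]
      _ ≤ ENNReal.ofReal (Real.exp (-((d : ℝ) + 1) * Eperbit β)) := by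
          rw [← ENNReal.ofReal_mul (by positivity)]
          apply ENNReal.ofReal_le_ofReal
          have hc : ((sb.card : ℕ) : ℝ) = (d : ℝ) + 1 := by
            rw [hsb_card]; push_cast; ring
          rw [hc, neg_sq]
          calc C1 * Real.exp (-lam * (((d : ℝ) + 1) * Real.sqrt (2 * β)))
                * Real.exp (((d : ℝ) + 1) * lam ^ 2 / 2)
              = ((2 : ℝ) ^ d) ^ ρ * Real.exp (lam ^ 2 * ((d : ℝ) + 1) / (2 * ρ)) *
                  (Real.exp (-lam * (((d : ℝ) + 1) * Real.sqrt (2 * β))) *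
                    Real.exp (((d : ℝ) + 1) * lam ^ 2 / 2)) := by ring
            _ ≤ Real.exp (-((d : ℝ) + 1) * Eperbit β) := hexp1
  have hint2 : ∫⁻ u, B2 u ∂P1
      ≤ ENNReal.ofReal (Real.exp (-((d : ℝ) + 1) * Eperbit β)) := by
    have heq : ∫⁻ u, B2 u ∂P1 = P1 {u | T u < 0} := by
      show ∫⁻ u, Set.indicator {u | T u < 0} (fun _ => 1) u ∂P1 = _
      rw [lintegral_indicator hTset, setLIntegral_one]
    rw [heq]
    have hsubset : {u : ({j : PPMIdx (i + d) // p j} → ℝ) | T u < 0}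
        ⊆ {u | ∑ j ∈ sb, u j ≤ -(((d : ℝ) + 1) * Real.sqrt (2 * β))} := by
      intro u hu
      have h1 : T u < 0 := hu
      have h2 := hTu_eq u
      show ∑ j ∈ sb, u j ≤ -(((d : ℝ) + 1) * Real.sqrt (2 * β))
      linarith [h1, h2.symm.le, h2.le]
    calc P1 {u | T u < 0}
        ≤ P1 {u | ∑ j ∈ sb, u j ≤ -(((d : ℝ) + 1) * Real.sqrt (2 * β))} :=
          measure_mono hsubset
      _ ≤ ENNReal.ofReal (Real.exp ((sb.card : ℝ) * (-Real.sqrt (2 * β)) ^ 2 / 2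
            - (-Real.sqrt (2 * β)) * (-(((d : ℝ) + 1) * Real.sqrt (2 * β))))) :=
          pi_gaussian_lower_tail sb _ (-Real.sqrt (2 * β))
            (neg_nonpos.2 (Real.sqrt_nonneg _))
      _ ≤ ENNReal.ofReal (Real.exp (-((d : ℝ) + 1) * Eperbit β)) := by
          apply ENNReal.ofReal_le_ofReal
          have hc : ((sb.card : ℕ) : ℝ) = (d : ℝ) + 1 := by
            rw [hsb_card]; push_cast; ring
          rw [hc]
          have hs2 : Real.sqrt (2 * β) ^ 2 = 2 * β := Real.sq_sqrt (by positivity)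
          calc Real.exp (((d : ℝ) + 1) * (-Real.sqrt (2 * β)) ^ 2 / 2
                - (-Real.sqrt (2 * β)) * (-(((d : ℝ) + 1) * Real.sqrt (2 * β))))
              = Real.exp (-((d : ℝ) + 1) * β) := by
                congr 1
                rw [neg_sq]
                linear_combination (-(((d : ℝ) + 1)) / 2) * hs2
            _ ≤ Real.exp (-((d : ℝ) + 1) * Eperbit β) := hexp2
  -- put everything together
  calc P A = ∫⁻ u, P2 (Prod.mk u ⁻¹' (⇑e.symm ⁻¹' A)) ∂P1 := by
        rw [hPA, Measure.prod_apply hslice]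
    _ ≤ ∫⁻ u, (B1 u + B2 u) ∂P1 := lintegral_mono inner
    _ = ∫⁻ u, B1 u ∂P1 + ∫⁻ u, B2 u ∂P1 := lintegral_add_left hB1meas B2
    _ ≤ ENNReal.ofReal (Real.exp (-((d : ℝ) + 1) * Eperbit β))
          + ENNReal.ofReal (Real.exp (-((d : ℝ) + 1) * Eperbit β)) :=
        add_le_add hint1 hint2
    _ = ENNReal.ofReal (2 * Real.exp (-((d : ℝ) + 1) * Eperbit β)) := by
        rw [← ENNReal.ofReal_add (Real.exp_nonneg _) (Real.exp_nonneg _)]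
        congr 1
        ring
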